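/- arXiv:1801.08923 — 5 statements merged into one kernel-verified Lean document; each statement's English description precedes it below -/
import Mathlib

section
/- For d ≥ 2, the sum over all permutations σ of {1,…,d−1} of ∏_{j=1}^{d-1} (∑_{i=1}^j x_{σ(i)})^{-1}, evaluated at x = (2,1,1,…,1) (one part equal to 2 and d−2 parts equal to 1), equals 1/2. -/
open Finset Nat

lemma fact_Ico (a : ℕ) : ∀ b, a ≤ b → (a+1)! * ∏ j ∈ Ico a b, (j+2) = (b+1)! := by
  intro b hb
  induction b, hb using Nat.le_induction with
  | base => simp
  | succ b hb ih =>
    rw [Finset.prod_Ico_succ_top hb, ← mul_assoc, ih,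
      show (b+1+1)! = (b+2)*(b+1)! from factorial_succ _]
    ring

lemma prod_nat (m p : ℕ) (hp : p ≤ m) :
    (p+1) * ∏ j ∈ range (m+1), (j + 1 + if p ≤ j then 1 else 0) = (m+2)! := by
  rw [Finset.range_eq_Ico, ← Finset.prod_Ico_consecutive _ (Nat.zero_le p) (by omega : p ≤ m+1)]
  have h1 : ∏ j ∈ Ico 0 p, (j + 1 + if p ≤ j then 1 else 0) = p ! := by
    rw [Nat.Ico_zero_eq_range, ← Finset.prod_range_add_one_eq_factorial]
    exact Finset.prod_congr rfl fun j hj => by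
      rw [Finset.mem_range] at hj; rw [if_neg (by omega)]
  have h2 : ∏ j ∈ Ico p (m+1), (j + 1 + if p ≤ j then 1 else 0)
      = ∏ j ∈ Ico p (m+1), (j + 2) := by
    exact Finset.prod_congr rfl fun j hj => by
      rw [Finset.mem_Ico] at hj; rw [if_pos (by omega)]
  rw [h1, h2, ← mul_assoc]
  have : (p + 1) * p ! = (p+1)! := (factorial_succ p).symm
  rw [this]
  exact fact_Ico p (m+1) (by omega)

lemma gauss (m : ℕ) : 2 * ∑ p ∈ range (m+1), (p+1) = (m+1)*(m+2) := by
  induction m with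
  | zero => simp
  | succ m ih => rw [Finset.sum_range_succ, Nat.mul_add, ih]; ring

lemma aux (m : ℕ) :
    ∑ σ : Equiv.Perm (Fin (m+1)), ∏ j : Fin (m+1),
      (∑ i ∈ Finset.Iic j, (if ((σ i : Fin (m+1)) : ℕ) = 0 then (2:ℝ) else 1))⁻¹
      = 1/2 := by
  set g : Fin (m+1) → ℝ :=
    fun k => ∏ j : Fin (m+1), (((j:ℕ):ℝ) + 1 + if k ≤ j then 1 else 0)⁻¹ with hg
  have hsummand : ∀ σ : Equiv.Perm (Fin (m+1)),
      (∏ j : Fin (m+1),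
        (∑ i ∈ Finset.Iic j, (if ((σ i : Fin (m+1)) : ℕ) = 0 then (2:ℝ) else 1))⁻¹)
      = g (σ⁻¹ 0) := by
    intro σ
    refine Finset.prod_congr rfl fun j _ => ?_
    congr 1
    have : ∀ i ∈ Finset.Iic j,
        (if ((σ i : Fin (m+1)) : ℕ) = 0 then (2:ℝ) else 1)
        = 1 + if i = σ⁻¹ 0 then 1 else 0 := by
      intro i _
      by_cases h : σ i = 0
      · rw [if_pos (by simp [h]), if_pos (by simp [← h])]
        norm_num
      · rw [if_neg (fun h' => h (Fin.ext (by simp [h']))),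
          if_neg (by intro hi; exact h (by simp [hi]))]
        norm_num
    rw [Finset.sum_congr rfl this, Finset.sum_add_distrib, Finset.sum_const,
      Finset.sum_ite_eq' (Finset.Iic j) (σ⁻¹ 0) (fun _ => (1:ℝ)),
      Fin.card_Iic]
    simp only [Finset.mem_Iic, nsmul_eq_mul, mul_one]
    push_cast
    ring
  rw [Finset.sum_congr rfl fun σ _ => hsummand σ]
  have h1 : ∑ σ : Equiv.Perm (Fin (m+1)), g (σ⁻¹ 0)
      = ∑ σ : Equiv.Perm (Fin (m+1)), g (σ 0) :=
    Fintype.sum_equiv (Equiv.inv _) _ _ (fun σ => rfl)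
  rw [h1]
  have h2 : ∑ σ : Equiv.Perm (Fin (m+1)), g (σ 0)
      = ∑ pr : Fin (m+1) × Equiv.Perm (Fin m), g pr.1 := by
    refine (Fintype.sum_equiv Equiv.Perm.decomposeFin.symm _ _ fun pr => ?_).symm
    rw [Equiv.Perm.decomposeFin_symm_apply_zero]
  rw [h2, Fintype.sum_prod_type]
  simp only [Finset.sum_const, Finset.card_univ, Fintype.card_perm, Fintype.card_fin,
    nsmul_eq_mul]
  have hgval : ∀ p : Fin (m+1), g p = (((p:ℕ):ℝ) + 1) / (m+2)! := by
    intro p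
    show (∏ j : Fin (m+1), (((j:ℕ):ℝ) + 1 + if p ≤ j then 1 else 0)⁻¹)
      = (((p:ℕ):ℝ) + 1) / (m+2)!
    have key := prod_nat m (p:ℕ) (by omega)
    have hprod : ∏ j : Fin (m+1), (((j:ℕ):ℝ) + 1 + if p ≤ j then 1 else 0)
        = ((∏ j ∈ range (m+1), (j + 1 + if (p:ℕ) ≤ j then 1 else 0) : ℕ) : ℝ) := by
      rw [Nat.cast_prod, ← Fin.prod_univ_eq_prod_range
        (fun j => ((j + 1 + if (p:ℕ) ≤ j then 1 else 0 : ℕ) : ℝ))]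
      refine Finset.prod_congr rfl fun j _ => ?_
      by_cases h : (p:ℕ) ≤ (j:ℕ) <;> simp [h, Fin.le_def]
    rw [Finset.prod_inv_distrib, hprod]
    have hne : ((∏ j ∈ range (m+1), (j + 1 + if (p:ℕ) ≤ j then 1 else 0) : ℕ) : ℝ) ≠ 0 := by
      positivity
    rw [eq_div_iff (by positivity : ((m+2)! : ℝ) ≠ 0), inv_mul_eq_div,
      div_eq_iff hne]
    have := congrArg (fun n : ℕ => (n : ℝ)) key
    push_cast at this ⊢
    linarith [this]
  have hS : (∑ x ∈ range (m+1), ((x:ℝ)+1)) * 2 = (m+1)*(m+2) := by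
    have h := congrArg (fun n : ℕ => (n:ℝ)) (gauss m)
    push_cast at h
    linarith
  have hfac : ((m+2)! : ℝ) = (m+2) * ((m+1) * m !) := by
    rw [show m+2 = (m+1)+1 from rfl, Nat.factorial_succ, Nat.factorial_succ]
    push_cast
    ring
  calc ∑ x : Fin (m+1), (m ! : ℝ) * g x
      = ∑ x : Fin (m+1), (m ! : ℝ) * ((((x:ℕ):ℝ)+1)/(m+2)!) :=
        Finset.sum_congr rfl fun p _ => by rw [hgval p]
    _ = (m ! : ℝ) * ((∑ x ∈ range (m+1), ((x:ℝ)+1)) / (m+2)!) := by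
        rw [← Finset.mul_sum, ← Finset.sum_div, Fin.sum_univ_eq_sum_range (fun x => (x:ℝ)+1)]
    _ = 1/2 := by
        rw [hfac]
        have hm : (m ! : ℝ) ≠ 0 := by positivity
        field_simp
        linear_combination hS


/-- For `d ≥ 2`, the sum over σ ∈ S_{d-1} of ∏_j (∑_{i≤j} x_{σ(i)})⁻¹ at
x = (2,1,…,1) equals 1/2. -/
theorem sum_perm_prod_inv_two_ones (d : ℕ) (hd : 2 ≤ d)
    (x : Fin (d - 1) → ℝ) (hx : ∀ i, x i = if (i : ℕ) = 0 then 2 else 1) :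
    ∑ σ : Equiv.Perm (Fin (d - 1)), ∏ j : Fin (d - 1),
      (∑ i ∈ Finset.Iic j, x (σ i))⁻¹ = 1 / 2 := by
  have hx' : x = fun i : Fin (d-1) => if (i : ℕ) = 0 then (2:ℝ) else 1 := funext hx
  subst hx'
  obtain ⟨m, hm⟩ : ∃ m, d - 1 = m + 1 := ⟨d - 2, by omega⟩
  rw [hm]
  exact aux m
end

section
/- For positive integers x_1,…,x_m, as ε → 0⁺, ε^m · ∑_{σ∈S_m} ∏_{j=1}^m (exp(ε ∑_{i=1}^j x_{σ(i)}) − 1)^{-1} = ∑_{σ∈S_m} [ (∏_{j=1}^m s_j(σ))^{-1} − (ε/2) ∑_{r=1}^m s_r(σ)/∏_{j=1}^m s_j(σ) ] + O(ε²), where s_j(σ) = ∑_{i=1}^j x_{σ(i)}. -/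
open Filter
open Real Filter Asymptotics
open Real

lemma key_ineq {t : ℝ} (ht : 0 < t) (ht1 : t ≤ 1) :
    |t * (exp t - 1)⁻¹ - (1 - t / 2)| ≤ t ^ 2 := by
  have hD : 0 < exp t - 1 := by
    have h1 : (1:ℝ) < exp t := by
      rw [← Real.exp_zero]; exact exp_lt_exp.2 ht
    linarith
  have hb := Real.exp_bound (n := 3) (by rw [abs_of_pos ht]; exact ht1) (by norm_num)
  rw [abs_of_pos ht] at hb
  have hsum : ∑ m ∈ Finset.range 3, t ^ m / (m.factorial : ℝ) = 1 + t + t ^ 2 / 2 := by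
    simp [Finset.sum_range_succ, Nat.factorial]
  rw [hsum] at hb
  have hb' : |exp t - (1 + t + t ^ 2 / 2)| ≤ t ^ 3 * (2 / 9) := by
    convert hb using 2
    simp [Nat.factorial]
    norm_num
  rw [abs_le] at hb'
  have hDl : t ≤ exp t - 1 := by have := Real.add_one_le_exp t; linarith
  have key : t * (exp t - 1)⁻¹ - (1 - t / 2) = (t - (1 - t / 2) * (exp t - 1)) / (exp t - 1) := by
    field_simp
  rw [key, abs_div, abs_of_pos hD, div_le_iff₀ hD]
  have hnum : |t - (1 - t / 2) * (exp t - 1)| ≤ t ^ 3 := by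
    rw [abs_le]
    constructor <;> nlinarith [sq_nonneg t, pow_pos ht 3, pow_pos ht 4]
  calc |t - (1 - t / 2) * (exp t - 1)| ≤ t ^ 3 := hnum
    _ = t ^ 2 * t := by ring
    _ ≤ t ^ 2 * (exp t - 1) := by nlinarith [sq_nonneg t]

lemma factorO {s : ℝ} (hs : 0 < s) :
    (fun ε : ℝ => ε * (exp (ε * s) - 1)⁻¹ - (s⁻¹ - ε / 2))
      =O[nhdsWithin 0 (Set.Ioi 0)] fun ε => ε ^ 2 := by
  apply Asymptotics.IsBigO.of_bound s
  filter_upwards [Ioo_mem_nhdsGT_of_mem (Set.mem_Ico.2 ⟨le_refl (0:ℝ), by positivity⟩ :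
    (0:ℝ) ∈ Set.Ico 0 (1/s))] with ε hε
  obtain ⟨hε0, hε1⟩ := hε
  have ht : 0 < ε * s := mul_pos hε0 hs
  have ht1 : ε * s ≤ 1 := by
    rw [← le_div_iff₀ hs]
    exact le_of_lt hε1
  have hkey := key_ineq ht ht1
  have heq : ε * (exp (ε * s) - 1)⁻¹ - (s⁻¹ - ε / 2)
      = s⁻¹ * ((ε * s) * (exp (ε * s) - 1)⁻¹ - (1 - (ε * s) / 2)) := by
    field_simp
  rw [heq]
  rw [Real.norm_eq_abs, Real.norm_eq_abs, abs_mul, abs_of_nonneg (by positivity : (0:ℝ) ≤ s⁻¹)]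
  calc s⁻¹ * |(ε * s) * (exp (ε * s) - 1)⁻¹ - (1 - (ε * s) / 2)| ≤ s⁻¹ * ((ε * s) ^ 2) := by
        exact mul_le_mul_of_nonneg_left hkey (by positivity)
    _ = s * |ε ^ 2| := by
        rw [abs_of_nonneg (by positivity : (0:ℝ) ≤ ε ^ 2)]
        field_simp
open Real Filter Asymptotics

variable {ι : Type*} [DecidableEq ι] {l : Filter ℝ}

lemma prod_isBigO_one (s : Finset ι) (g : ι → ℝ → ℝ)
    (hg : ∀ j ∈ s, (g j) =O[l] (fun _ => (1:ℝ))) :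
    (fun ε => ∏ j ∈ s, g j ε) =O[l] (fun _ => (1:ℝ)) := by
  induction s using Finset.induction_on with
  | empty => simpa using isBigO_refl (fun _ : ℝ => (1:ℝ)) l
  | insert a s ha ih =>
    simp only [Finset.prod_insert ha]
    have := (hg a (Finset.mem_insert_self a s)).mul
      (ih fun j hj => hg j (Finset.mem_insert_of_mem hj))
    simpa using this

lemma prod_sub_prod_isBigO (s : Finset ι) (f g : ι → ℝ → ℝ) (e : ℝ → ℝ)
    (hf : ∀ j ∈ s, (f j) =O[l] (fun _ => (1:ℝ)))
    (hg : ∀ j ∈ s, (g j) =O[l] (fun _ => (1:ℝ)))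
    (hfg : ∀ j ∈ s, (fun ε => f j ε - g j ε) =O[l] e) :
    (fun ε => ∏ j ∈ s, f j ε - ∏ j ∈ s, g j ε) =O[l] e := by
  induction s using Finset.induction_on with
  | empty => simpa using isBigO_zero e l
  | insert a s ha ih =>
    have h1 : ∀ j ∈ s, (f j) =O[l] (fun _ => (1:ℝ)) := fun j hj => hf j (Finset.mem_insert_of_mem hj)
    have h2 : ∀ j ∈ s, (g j) =O[l] (fun _ => (1:ℝ)) := fun j hj => hg j (Finset.mem_insert_of_mem hj)
    have h3 : ∀ j ∈ s, (fun ε => f j ε - g j ε) =O[l] e := fun j hj => hfg j (Finset.mem_insert_of_mem hj)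
    have key : (fun ε => ∏ j ∈ insert a s, f j ε - ∏ j ∈ insert a s, g j ε)
        = fun ε => f a ε * (∏ j ∈ s, f j ε - ∏ j ∈ s, g j ε)
            + (f a ε - g a ε) * ∏ j ∈ s, g j ε := by
      funext ε
      rw [Finset.prod_insert ha, Finset.prod_insert ha]
      ring
    rw [key]
    have A : (fun ε => f a ε * (∏ j ∈ s, f j ε - ∏ j ∈ s, g j ε)) =O[l] e := by
      have := (hf a (Finset.mem_insert_self a s)).mul (ih h1 h2 h3)
      simpa using this
    have B : (fun ε => (f a ε - g a ε) * ∏ j ∈ s, g j ε) =O[l] e := by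
      have := (hfg a (Finset.mem_insert_self a s)).mul (prod_isBigO_one s g h2)
      simpa [mul_comm] using this
    exact A.add B

lemma prod_linear_expansion (hε : (fun ε : ℝ => ε) =O[l] (fun _ => (1:ℝ)))
    (c d : ι → ℝ) (s : Finset ι) :
    (fun ε => ∏ j ∈ s, (c j + d j * ε)
        - ((∏ j ∈ s, c j) + ε * ∑ r ∈ s, d r * ∏ j ∈ s.erase r, c j))
      =O[l] fun ε => ε ^ 2 := by
  induction s using Finset.induction_on with
  | empty => simpa using isBigO_zero (fun ε : ℝ => ε ^ 2) l
  | insert a s ha ih =>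
    have key : (fun ε => ∏ j ∈ insert a s, (c j + d j * ε)
          - ((∏ j ∈ insert a s, c j) + ε * ∑ r ∈ insert a s, d r * ∏ j ∈ (insert a s).erase r, c j))
        = fun ε => (c a + d a * ε) * (∏ j ∈ s, (c j + d j * ε)
              - ((∏ j ∈ s, c j) + ε * ∑ r ∈ s, d r * ∏ j ∈ s.erase r, c j))
            + (d a * ∑ r ∈ s, d r * ∏ j ∈ s.erase r, c j) * ε ^ 2 := by
      funext ε
      rw [Finset.prod_insert ha, Finset.prod_insert ha, Finset.sum_insert ha,
        Finset.erase_insert ha]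
      have : ∀ r ∈ s, d r * ∏ j ∈ (insert a s).erase r, c j
          = d r * (c a * ∏ j ∈ s.erase r, c j) := by
        intro r hr
        rw [Finset.erase_insert_of_ne (by rintro rfl; exact ha hr),
          Finset.prod_insert (fun h => ha (Finset.mem_of_mem_erase h))]
      rw [Finset.sum_congr rfl this]
      have hS : ∑ r ∈ s, d r * (c a * ∏ j ∈ s.erase r, c j)
          = c a * ∑ r ∈ s, d r * ∏ j ∈ s.erase r, c j := by
        rw [Finset.mul_sum]
        exact Finset.sum_congr rfl fun r _ => by ring
      rw [hS]
      ring
    rw [key]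
    have A : (fun ε : ℝ => (c a + d a * ε)) =O[l] (fun _ => (1:ℝ)) := by
      have := (isBigO_const_const (c a) (one_ne_zero (α := ℝ)) l).add (hε.const_mul_left (d a))
      simpa using this
    have B := A.mul ih
    have C : (fun ε : ℝ => (d a * ∑ r ∈ s, d r * ∏ j ∈ s.erase r, c j) * ε ^ 2)
        =O[l] fun ε => ε ^ 2 := (isBigO_refl _ l).const_mul_left _
    have B' : (fun ε => (c a + d a * ε) * (∏ j ∈ s, (c j + d j * ε)
        - ((∏ j ∈ s, c j) + ε * ∑ r ∈ s, d r * ∏ j ∈ s.erase r, c j)))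
        =O[l] fun ε => ε ^ 2 := by simpa using B
    exact B'.add C

lemma linear_isBigO_one (hε : (fun ε : ℝ => ε) =O[l] fun _ => (1:ℝ)) (a b : ℝ) :
    (fun ε : ℝ => a + b * ε) =O[l] fun _ => (1:ℝ) := by
  have h1 : (fun _ : ℝ => a) =O[l] (fun _ => (1:ℝ)) := isBigO_const_const a one_ne_zero l
  have h2 := hε.const_mul_left b
  exact h1.add h2

lemma perm_term (m : ℕ) (S : Fin m → ℝ) (hS : ∀ j, 0 < S j) :
    (fun ε : ℝ => ε ^ m * ∏ j : Fin m, (Real.exp (ε * S j) - 1)⁻¹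
      - ((∏ j : Fin m, S j)⁻¹ - ε / 2 * ∑ r : Fin m, S r / ∏ j : Fin m, S j))
    =O[nhdsWithin 0 (Set.Ioi 0)] fun ε => ε ^ 2 := by
  set l := nhdsWithin (0:ℝ) (Set.Ioi 0) with hl
  have hε : (fun ε : ℝ => ε) =O[l] (fun _ => (1:ℝ)) := by
    apply IsBigO.of_bound 1
    filter_upwards [Ioo_mem_nhdsGT_of_mem (Set.mem_Ico.2 ⟨le_refl (0:ℝ), one_pos⟩)] with ε hε
    rw [Real.norm_eq_abs, Real.norm_eq_abs, abs_of_pos hε.1, abs_one]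
    linarith [hε.2]
  have hε2 : (fun ε : ℝ => ε ^ 2) =O[l] (fun _ => (1:ℝ)) := by
    have := hε.mul hε
    simpa [pow_two] using this
  -- main decomposition
  have main_eq : (fun ε : ℝ => ε ^ m * ∏ j : Fin m, (Real.exp (ε * S j) - 1)⁻¹
      - ((∏ j : Fin m, S j)⁻¹ - ε / 2 * ∑ r : Fin m, S r / ∏ j : Fin m, S j))
      = fun ε => (∏ j : Fin m, (ε * (Real.exp (ε * S j) - 1)⁻¹)
            - ∏ j : Fin m, ((S j)⁻¹ + (-(1/2) : ℝ) * ε))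
        + (∏ j : Fin m, ((S j)⁻¹ + (-(1/2) : ℝ) * ε)
            - ((∏ j : Fin m, (S j)⁻¹)
              + ε * ∑ r : Fin m, (-(1/2) : ℝ) * ∏ j ∈ Finset.univ.erase r, (S j)⁻¹)) := by
    funext ε
    have h1 : ε ^ m * ∏ j : Fin m, (Real.exp (ε * S j) - 1)⁻¹
        = ∏ j : Fin m, (ε * (Real.exp (ε * S j) - 1)⁻¹) := by
      rw [Finset.prod_mul_distrib, Finset.prod_const, Finset.card_univ, Fintype.card_fin]
    have herase : ∀ r : Fin m, ∏ j ∈ Finset.univ.erase r, (S j)⁻¹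
        = (∏ j : Fin m, (S j)⁻¹) * S r := by
      intro r
      have h := Finset.prod_erase_mul Finset.univ (fun j => (S j)⁻¹) (Finset.mem_univ r)
      have h0 : (S r) ≠ 0 := (hS r).ne'
      calc ∏ j ∈ Finset.univ.erase r, (S j)⁻¹
          = ((∏ j ∈ Finset.univ.erase r, (S j)⁻¹) * (S r)⁻¹) * S r := by
            rw [mul_assoc, inv_mul_cancel₀ h0, mul_one]
        _ = (∏ j : Fin m, (S j)⁻¹) * S r := by rw [h]
    have hsum : ∑ r : Fin m, (-(1/2) : ℝ) * ∏ j ∈ Finset.univ.erase r, (S j)⁻¹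
        = (-(1/2) : ℝ) * ((∏ j : Fin m, (S j)⁻¹) * ∑ r : Fin m, S r) := by
      rw [Finset.sum_congr rfl fun r _ => by rw [herase r]]
      rw [Finset.mul_sum, Finset.mul_sum]
    have hinv : (∏ j : Fin m, S j)⁻¹ = ∏ j : Fin m, (S j)⁻¹ := by
      rw [← Finset.prod_inv_distrib]
    have hsum2 : ∑ r : Fin m, S r / ∏ j : Fin m, S j
        = (∑ r : Fin m, S r) * (∏ j : Fin m, S j)⁻¹ := by
      rw [← Finset.sum_div, div_eq_mul_inv]
    rw [h1, hsum, hsum2, hinv]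
    ring
  rw [main_eq]
  have hfg : ∀ j : Fin m, (fun ε : ℝ => ε * (Real.exp (ε * S j) - 1)⁻¹
      - ((S j)⁻¹ + (-(1/2) : ℝ) * ε)) =O[l] fun ε => ε ^ 2 := by
    intro j
    have h1 := factorO (hS j)
    have heq : (fun ε : ℝ => ε * (Real.exp (ε * S j) - 1)⁻¹ - ((S j)⁻¹ + (-(1/2) : ℝ) * ε))
        = fun ε : ℝ => ε * (Real.exp (ε * S j) - 1)⁻¹ - ((S j)⁻¹ - ε / 2) := by
      funext ε; ring
    rw [heq]
    exact h1
  have hg : ∀ j : Fin m, (fun ε : ℝ => (S j)⁻¹ + (-(1/2) : ℝ) * ε) =O[l] fun _ => (1:ℝ) :=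
    fun j => linear_isBigO_one hε _ _
  have hf : ∀ j : Fin m, (fun ε : ℝ => ε * (Real.exp (ε * S j) - 1)⁻¹) =O[l] fun _ => (1:ℝ) := by
    intro j
    have := ((hfg j).trans hε2).add (hg j)
    have heq : (fun ε : ℝ => (ε * (Real.exp (ε * S j) - 1)⁻¹
        - ((S j)⁻¹ + (-(1/2) : ℝ) * ε)) + ((S j)⁻¹ + (-(1/2) : ℝ) * ε))
        = fun ε : ℝ => ε * (Real.exp (ε * S j) - 1)⁻¹ := by
      funext ε; ring
    rwa [heq] at this
  have A := prod_sub_prod_isBigO (l := l) Finset.univ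
    (fun j (ε : ℝ) => ε * (Real.exp (ε * S j) - 1)⁻¹)
    (fun j (ε : ℝ) => (S j)⁻¹ + (-(1/2) : ℝ) * ε)
    (fun ε => ε ^ 2) (fun j _ => hf j) (fun j _ => hg j) (fun j _ => hfg j)
  have B := prod_linear_expansion (l := l) hε (fun j => (S j)⁻¹) (fun _ => (-(1/2) : ℝ))
    Finset.univ
  exact A.add B

/-- Semiclassical expansion of `ε^m Φ_ε(x₁,…,x_m)` up to order `O(ε²)`. -/
theorem semiclassical_expansion_Phi (m : ℕ) (x : Fin m → ℕ) (hx : ∀ i, 0 < x i) :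
    (fun ε : ℝ =>
        ε ^ m * ∑ σ : Equiv.Perm (Fin m),
          ∏ j : Fin m, (Real.exp (ε * ∑ i ∈ Finset.Iic j, (x (σ i) : ℝ)) - 1)⁻¹
        - ∑ σ : Equiv.Perm (Fin m),
            ((∏ j : Fin m, (∑ i ∈ Finset.Iic j, (x (σ i) : ℝ)))⁻¹
              - ε / 2 * ∑ r : Fin m, (∑ i ∈ Finset.Iic r, (x (σ i) : ℝ)) /
                  ∏ j : Fin m, (∑ i ∈ Finset.Iic j, (x (σ i) : ℝ))))
      =O[nhdsWithin 0 (Set.Ioi 0)] fun ε => ε ^ 2 := by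

  have heq : (fun ε : ℝ =>
        ε ^ m * ∑ σ : Equiv.Perm (Fin m),
          ∏ j : Fin m, (Real.exp (ε * ∑ i ∈ Finset.Iic j, (x (σ i) : ℝ)) - 1)⁻¹
        - ∑ σ : Equiv.Perm (Fin m),
            ((∏ j : Fin m, (∑ i ∈ Finset.Iic j, (x (σ i) : ℝ)))⁻¹
              - ε / 2 * ∑ r : Fin m, (∑ i ∈ Finset.Iic r, (x (σ i) : ℝ)) /
                  ∏ j : Fin m, (∑ i ∈ Finset.Iic j, (x (σ i) : ℝ))))
      = fun ε : ℝ => ∑ σ : Equiv.Perm (Fin m),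
          (ε ^ m * ∏ j : Fin m, (Real.exp (ε * ∑ i ∈ Finset.Iic j, (x (σ i) : ℝ)) - 1)⁻¹
            - ((∏ j : Fin m, (∑ i ∈ Finset.Iic j, (x (σ i) : ℝ)))⁻¹
              - ε / 2 * ∑ r : Fin m, (∑ i ∈ Finset.Iic r, (x (σ i) : ℝ)) /
                  ∏ j : Fin m, (∑ i ∈ Finset.Iic j, (x (σ i) : ℝ)))) := by
    funext ε
    rw [Finset.mul_sum, ← Finset.sum_sub_distrib]
  rw [heq]
  apply Asymptotics.IsBigO.fun_sum
  intro σ _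
  exact perm_term m (fun j => ∑ i ∈ Finset.Iic j, (x (σ i) : ℝ))
    (fun j => Finset.sum_pos (fun i _ => by exact_mod_cast hx (σ i))
      ⟨j, Finset.mem_Iic.2 le_rfl⟩)
end

section
/- For 0 < q < 1, the infinite product E'(q,z) = ∏_{i=1}^∞ (1 + q^i z) converges for all real z, and its power series coefficients are given by E'_i(q) = q^{i(i+1)/2} / ∏_{j=1}^i (1 − q^j) for i ≥ 1; that is, ∏_{i=1}^∞ (1 + q^i z) = 1 + ∑_{i=1}^∞ (q^{i(i+1)/2} / ∏_{j=1}^i (1−q^j)) z^i. -/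
open Polynomial Filter Finset Topology

namespace EulerQB

noncomputable def P (q : ℝ) (n : ℕ) : Polynomial ℝ :=
  ∏ i ∈ Finset.range n, (Polynomial.C (q ^ (i + 1)) * Polynomial.X + 1)

noncomputable def c (q : ℝ) (n k : ℕ) : ℝ := (P q n).coeff k

lemma P_eval (q z : ℝ) (n : ℕ) :
    (P q n).eval z = ∏ i ∈ Finset.range n, (1 + q ^ (i + 1) * z) := by
  rw [P, eval_prod]
  exact Finset.prod_congr rfl fun i _ => by simp; ring

lemma c_zero (q : ℝ) (n : ℕ) : c q n 0 = 1 := by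
  simp [c, coeff_zero_eq_eval_zero, P, eval_prod]

lemma c_n_zero (q : ℝ) (k : ℕ) : c q 0 (k + 1) = 0 := by
  simp [c, P, Polynomial.coeff_one]

lemma natDegree_P_le (q : ℝ) (n : ℕ) : (P q n).natDegree ≤ n := by
  refine le_trans (Polynomial.natDegree_prod_le _ _) ?_
  calc ∑ i ∈ Finset.range n, (Polynomial.C (q ^ (i + 1)) * Polynomial.X + 1).natDegree
      ≤ ∑ _i ∈ Finset.range n, 1 := by
        refine Finset.sum_le_sum fun i _ => ?_
        refine le_trans (natDegree_add_le _ _) ?_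
        simpa using (natDegree_C_mul_le (q ^ (i + 1)) X).trans (by simp)
    _ = n := by simp

lemma c_eq_zero (q : ℝ) {n k : ℕ} (h : n < k) : c q n k = 0 :=
  Polynomial.coeff_eq_zero_of_natDegree_lt (lt_of_le_of_lt (natDegree_P_le q n) h)

lemma c_rec1 (q : ℝ) (n k : ℕ) : c q (n + 1) (k + 1) = c q n (k + 1) + q ^ (n + 1) * c q n k := by
  have h : P q (n + 1) = C (q ^ (n + 1)) * (P q n * X) + P q n := by
    unfold P; rw [Finset.prod_range_succ]; ring
  simp only [c, h, coeff_add, coeff_C_mul, coeff_mul_X]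
  ring

lemma coeff_comp_C_mul_X (p : Polynomial ℝ) (q : ℝ) (k : ℕ) :
    (p.comp (C q * X)).coeff k = q ^ k * p.coeff k := by
  induction p using Polynomial.induction_on' with
  | add f g hf hg => simp [add_comp, hf, hg]; ring
  | monomial n a =>
      rw [← smul_X_eq_monomial, smul_eq_C_mul, mul_comp, C_comp, X_pow_comp, mul_pow, ← C_pow]
      rw [← mul_assoc, ← C_mul, coeff_C_mul, coeff_C_mul, coeff_X_pow]
      rcases eq_or_ne n k with rfl | h
      · simp [mul_comm]
      · simp [h, Ne.symm h]

lemma P_funeq (q : ℝ) (n : ℕ) :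
    P q (n + 1) = (C q * X + 1) * (P q n).comp (C q * X) := by
  rw [P, Finset.prod_range_succ', P, Polynomial.prod_comp]
  have : ∀ i : ℕ, (C (q ^ (i + 1)) * X + 1).comp (C q * X) = C (q ^ (i + 2)) * X + 1 := by
    intro i
    rw [add_comp, mul_comp, C_comp, one_comp, X_comp, ← mul_assoc, ← C_mul, ← pow_succ]
  simp only [this]
  rw [mul_comm]
  norm_num

lemma c_rec2 (q : ℝ) (n k : ℕ) :
    c q (n + 1) (k + 1) = q ^ (k + 1) * (c q n (k + 1) + c q n k) := by
  have h := P_funeq q n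
  have : P q (n + 1) = C q * ((P q n).comp (C q * X) * X) + (P q n).comp (C q * X) := by
    rw [h]; ring
  simp [c, this, coeff_add, coeff_C_mul, coeff_mul_X, coeff_comp_C_mul_X]
  ring


lemma P_sum (q z : ℝ) (n : ℕ) :
    ∏ i ∈ Finset.range n, (1 + q ^ (i + 1) * z) = ∑ k ∈ Finset.range (n + 1), c q n k * z ^ k := by
  rw [← P_eval q z n, Polynomial.eval_eq_sum_range' (Nat.lt_succ_of_le (natDegree_P_le q n))]
  rfl

noncomputable def A (q : ℝ) (k : ℕ) : ℝ := ∏ j ∈ Finset.range k, (q ^ (j + 1) / (1 - q ^ (j + 1)))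

lemma A_zero (q : ℝ) : A q 0 = 1 := by simp [A]

lemma A_succ (q : ℝ) (k : ℕ) : A q (k + 1) = A q k * (q ^ (k + 1) / (1 - q ^ (k + 1))) := by
  simp [A, Finset.prod_range_succ, div_mul_div_comm]

section
variable {q : ℝ} (hq : 0 < q) (hq1 : q < 1)
include hq hq1

lemma q_pow_lt_one (k : ℕ) : q ^ (k + 1) < 1 := pow_lt_one₀ hq.le hq1 (Nat.succ_ne_zero k)

lemma denom_pos (k : ℕ) : 0 < 1 - q ^ (k + 1) := by linarith [q_pow_lt_one hq hq1 k]

lemma A_nonneg (k : ℕ) : 0 ≤ A q k := by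
  refine Finset.prod_nonneg fun j _ => div_nonneg (by positivity) (denom_pos hq hq1 j).le

lemma c_nonneg (n k : ℕ) : 0 ≤ c q n k := by
  induction n generalizing k with
  | zero => cases k with
    | zero => simp [c_zero]
    | succ k => simp [c_n_zero]
  | succ n ih => cases k with
    | zero => simp [c_zero]
    | succ k =>
        rw [c_rec1]
        have := ih (k + 1); have := ih k
        positivity

lemma c_mono (n k : ℕ) : c q n k ≤ c q (n + 1) k := by
  cases k with
  | zero => simp [c_zero]
  | succ k =>
      rw [c_rec1]
      nlinarith [c_nonneg hq hq1 n k, pow_pos hq (n + 1)]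

lemma c_monotone (k : ℕ) : Monotone fun n => c q n k :=
  monotone_nat_of_le_succ fun n => c_mono hq hq1 n k

lemma c_le_A (n k : ℕ) : c q n k ≤ A q k := by
  induction k generalizing n with
  | zero => simp [c_zero, A_zero]
  | succ k ih =>
      induction n with
      | zero => rw [c_n_zero]; exact A_nonneg hq hq1 _
      | succ n ihn =>
          have h2 := c_rec2 q n k
          have hmono : c q n (k + 1) ≤ c q (n + 1) (k + 1) := c_mono hq hq1 n (k + 1)
          have hA : c q n k ≤ A q k := ih n
          have hd := denom_pos hq hq1 k
          have hqp : (0:ℝ) < q ^ (k + 1) := pow_pos hq _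
          rw [A_succ]
          rw [mul_div_assoc', le_div_iff₀ hd]
          nlinarith [A_nonneg hq hq1 k]

lemma c_tendsto (k : ℕ) : Tendsto (fun n => c q n k) atTop (𝓝 (A q k)) := by
  induction k with
  | zero => simpa [c_zero, A_zero] using tendsto_const_nhds
  | succ k ih =>
      have hbdd : BddAbove (Set.range fun n => c q n (k + 1)) :=
        ⟨A q (k + 1), by rintro x ⟨n, rfl⟩; exact c_le_A hq hq1 n (k + 1)⟩
      have hL : Tendsto (fun n => c q n (k + 1)) atTop
          (𝓝 (⨆ n, c q n (k + 1))) :=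
        tendsto_atTop_ciSup (c_monotone hq hq1 (k + 1)) hbdd
      set L := ⨆ n, c q n (k + 1) with hLdef
      have hshift : Tendsto (fun n => c q (n + 1) (k + 1)) atTop (𝓝 L) :=
        hL.comp (tendsto_add_atTop_nat 1)
      have hrhs : Tendsto (fun n => q ^ (k + 1) * (c q n (k + 1) + c q n k)) atTop
          (𝓝 (q ^ (k + 1) * (L + A q k))) :=
        (tendsto_const_nhds.mul (hL.add ih))
      have heq : L = q ^ (k + 1) * (L + A q k) := by
        refine tendsto_nhds_unique hshift ?_
        simpa only [← c_rec2] using hrhs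
      have hd := denom_pos hq hq1 k
      have hLA : L = A q (k + 1) := by
        rw [A_succ]
        field_simp
        nlinarith [heq]
      rw [← hLA]; exact hL

end

lemma A_closed {q : ℝ} (k : ℕ) :
    A q k = q ^ (k * (k + 1) / 2) / ∏ j ∈ Finset.range k, (1 - q ^ (j + 1)) := by
  rw [A, Finset.prod_div_distrib, Finset.prod_pow_eq_pow_sum]
  congr 2
  have hs : ∀ m : ℕ, 2 * (∑ j ∈ Finset.range m, (j + 1)) = m * (m + 1) := by
    intro m
    induction m with
    | zero => simp
    | succ m ih => rw [Finset.sum_range_succ, Nat.mul_add, ih]; ring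
  have := hs k
  omega

lemma abs_log_one_add_le {x : ℝ} (hx : |x| ≤ 1 / 2) : |Real.log (1 + x)| ≤ 2 * |x| := by
  have hx1 : -(1/2) ≤ x := by cases abs_le.1 hx; linarith
  have hx2 : x ≤ 1/2 := (abs_le.1 hx).2
  have hpos : (0:ℝ) < 1 + x := by linarith
  have h1 : Real.log (1 + x) ≤ x := by
    have := Real.log_le_sub_one_of_pos hpos
    linarith
  have h2 : -(2 * |x|) ≤ Real.log (1 + x) := by
    have hpos' : (0:ℝ) < (1 + x)⁻¹ := by positivity
    have := Real.log_le_sub_one_of_pos hpos'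
    rw [Real.log_inv] at this
    have h3 : (1 + x)⁻¹ - 1 = -x / (1 + x) := by field_simp; ring
    have h4 : -x / (1 + x) ≤ 2 * |x| := by
      rw [div_le_iff₀ hpos]
      have : |x| * 1 ≤ 2 * |x| * (1 + x) := by nlinarith [abs_nonneg x, neg_abs_le x, le_abs_self x]
      nlinarith [neg_abs_le x]
    linarith
  have h5 : x ≤ 2 * |x| := by nlinarith [le_abs_self x, abs_nonneg x]
  rw [abs_le]; constructor <;> linarith

section
variable {q : ℝ} (hq : 0 < q) (hq1 : q < 1)
include hq hq1

lemma summable_bound (z : ℝ) : Summable (fun k => A q k * |z| ^ k) := by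
  have h0 : Tendsto (fun k : ℕ => q ^ (k + 1) * (|z| + 1)) atTop (𝓝 0) := by
    have := tendsto_pow_atTop_nhds_zero_of_lt_one hq.le hq1
    simpa using ((this.comp (tendsto_add_atTop_nat 1)).mul_const (|z| + 1))
  have hev : ∀ᶠ k : ℕ in atTop, q ^ (k + 1) * (|z| + 1) ≤ 1 / 2 := by
    filter_upwards [h0.eventually_le_const (by norm_num : (0:ℝ) < 1/2)] with k hk
    · exact hk
  refine summable_of_ratio_norm_eventually_le (r := 1 / 2) (by norm_num) ?_
  filter_upwards [hev] with k hk
  have hd := denom_pos hq hq1 k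
  have hA := A_nonneg hq hq1 k
  have hA1 := A_nonneg hq hq1 (k + 1)
  rw [Real.norm_eq_abs, Real.norm_eq_abs, abs_of_nonneg (mul_nonneg hA1 (by positivity)),
    abs_of_nonneg (mul_nonneg hA (by positivity)), A_succ, pow_succ |z| k]
  have hq2 : q ^ (k + 1) * |z| ≤ (1 - q ^ (k + 1)) * (1 / 2) := by
    have h1 : q ^ (k + 1) * |z| + q ^ (k + 1) ≤ 1 / 2 := by
      calc q ^ (k + 1) * |z| + q ^ (k + 1) = q ^ (k + 1) * (|z| + 1) := by ring
        _ ≤ 1 / 2 := hk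
    nlinarith [pow_pos hq (k + 1)]
  calc A q k * (q ^ (k + 1) / (1 - q ^ (k + 1))) * (|z| ^ k * |z|)
      = (A q k * |z| ^ k) * ((q ^ (k + 1) * |z|) / (1 - q ^ (k + 1))) := by ring
    _ ≤ (A q k * |z| ^ k) * (1 / 2) := by
        refine mul_le_mul_of_nonneg_left ?_ (by positivity)
        rw [div_le_iff₀ hd]
        linarith [hq2]
    _ = 1 / 2 * (A q k * |z| ^ k) := by ring



lemma multipliable_all (z : ℝ) : Multipliable (fun i : ℕ => 1 + q ^ (i + 1) * z) := by
  have h0 : Tendsto (fun k : ℕ => q ^ (k + 1) * |z|) atTop (𝓝 0) := by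
    have := tendsto_pow_atTop_nhds_zero_of_lt_one hq.le hq1
    simpa using ((this.comp (tendsto_add_atTop_nat 1)).mul_const |z|)
  obtain ⟨N, hN⟩ := (h0.eventually_le_const (by norm_num : (0:ℝ) < 1/2)).exists_forall_of_atTop
  refine Multipliable.comp_nat_add (f := fun i : ℕ => 1 + q ^ (i + 1) * z) (k := N) ?_
  set g : ℕ → ℝ := fun i => 1 + q ^ (i + N + 1) * z with hg
  have hsmall : ∀ i : ℕ, |q ^ (i + N + 1) * z| ≤ 1 / 2 := by
    intro i
    rw [abs_mul, abs_of_nonneg (by positivity)]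
    calc q ^ (i + N + 1) * |z| ≤ q ^ (N + 1) * |z| := by
          refine mul_le_mul_of_nonneg_right ?_ (abs_nonneg z)
          exact pow_le_pow_of_le_one hq.le hq1.le (by omega)
      _ ≤ 1 / 2 := hN N le_rfl
  have hgpos : ∀ i, 0 < g i := by
    intro i
    have := hsmall i
    have := abs_le.1 this
    simp only [hg]
    linarith [this.1]
  have hlog : Summable fun i => Real.log (g i) := by
    refine Summable.of_norm_bounded (g := fun i => 2 * (q ^ (N + 1) * |z|) * q ^ i) ?_ ?_
    · exact ((summable_geometric_of_lt_one hq.le hq1).mul_left _)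
    · intro i
      rw [Real.norm_eq_abs]
      refine le_trans (abs_log_one_add_le (hsmall i)) ?_
      rw [abs_mul, abs_of_nonneg (pow_nonneg hq.le _)]
      calc 2 * (q ^ (i + N + 1) * |z|)
          = 2 * (q ^ (N + 1) * |z|) * q ^ i := by
            rw [show i + N + 1 = i + (N + 1) from rfl, pow_add]; ring
        _ ≤ 2 * (q ^ (N + 1) * |z|) * q ^ i := le_rfl
  refine ⟨Real.exp (∑' i, Real.log (g i)), ?_⟩
  have := hlog.hasSum.rexp
  refine this.congr_fun fun i => ?_
  simp only [Function.comp_apply]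
  rw [Real.exp_log (hgpos i)]

theorem main (z : ℝ) (hz : |q * z| < 1) :
    Summable (fun i : ℕ =>
      q ^ ((i + 1) * (i + 2) / 2) / (∏ j ∈ Finset.range (i + 1), (1 - q ^ (j + 1)))
        * z ^ (i + 1)) ∧
    ∏' i : ℕ, (1 + q ^ (i + 1) * z)
      = 1 + ∑' i : ℕ,
          q ^ ((i + 1) * (i + 2) / 2) / (∏ j ∈ Finset.range (i + 1), (1 - q ^ (j + 1)))
            * z ^ (i + 1) := by
  have hbound := summable_bound hq hq1 z
  set F : ℕ → ℕ → ℝ := fun n k => c q n k * z ^ k with hF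
  have hFb : ∀ n k, ‖F n k‖ ≤ A q k * |z| ^ k := by
    intro n k
    rw [Real.norm_eq_abs, hF, abs_mul, abs_of_nonneg (c_nonneg hq hq1 n k), abs_pow]
    exact mul_le_mul_of_nonneg_right (c_le_A hq hq1 n k) (by positivity)
  have hAz : ∀ k, ‖A q k * z ^ k‖ ≤ A q k * |z| ^ k := by
    intro k
    rw [Real.norm_eq_abs, abs_mul, abs_of_nonneg (A_nonneg hq hq1 k), abs_pow]
  have hsumAz : Summable (fun k => A q k * z ^ k) :=
    hbound.of_norm_bounded hAz
  -- limit of partial products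
  have htendsto : Tendsto (fun n => ∏ i ∈ Finset.range n, (1 + q ^ (i + 1) * z)) atTop
      (𝓝 (∑' k, A q k * z ^ k)) := by
    have hdc : Tendsto (fun n => ∑' k, F n k) atTop (𝓝 (∑' k, A q k * z ^ k)) := by
      refine tendsto_tsum_of_dominated_convergence hbound ?_ ?_
      · intro k
        exact ((c_tendsto hq hq1 k).mul_const _)
      · exact Eventually.of_forall fun n => hFb n
    have heq : ∀ n, ∑' k, F n k = ∏ i ∈ Finset.range n, (1 + q ^ (i + 1) * z) := by
      intro n
      rw [P_sum q z n]
      refine tsum_eq_sum ?_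
      intro k hk
      simp only [hF]
      rw [c_eq_zero q (by simpa using (Finset.mem_range.not.1 hk)), zero_mul]
    simpa only [funext heq] using hdc
  have hmult := multipliable_all hq hq1 z
  have htp : ∏' i : ℕ, (1 + q ^ (i + 1) * z) = ∑' k, A q k * z ^ k :=
    tendsto_nhds_unique hmult.hasProd.tendsto_prod_nat htendsto
  have hAconv : ∀ i : ℕ, A q (i + 1) * z ^ (i + 1)
      = q ^ ((i + 1) * (i + 2) / 2) / (∏ j ∈ Finset.range (i + 1), (1 - q ^ (j + 1)))
        * z ^ (i + 1) := by
    intro i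
    rw [A_closed (q := q) (i + 1)]
  have hsum1 : Summable (fun i : ℕ =>
      q ^ ((i + 1) * (i + 2) / 2) / (∏ j ∈ Finset.range (i + 1), (1 - q ^ (j + 1)))
        * z ^ (i + 1)) := by
    have := (summable_nat_add_iff 1).2 hsumAz
    refine this.congr fun i => hAconv i
  refine ⟨hsum1, ?_⟩
  rw [htp, hsumAz.tsum_eq_zero_add]
  rw [A_zero]
  simp only [pow_zero, mul_one]
  congr 1
  exact tsum_congr hAconv


end
end EulerQB

/-- Euler's identity: `∏_{i=1}^∞ (1 + qⁱ z)` converges for all real `z`, and for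
`|qz| < 1` equals `1 + ∑_{i≥1} (q^{i(i+1)/2} / ∏_{j=1}^i (1 - q^j)) z^i`. -/
theorem euler_q_binomial (q : ℝ) (hq : 0 < q) (hq1 : q < 1) :
    (∀ z : ℝ, Multipliable (fun i : ℕ => 1 + q ^ (i + 1) * z)) ∧
    ∀ z : ℝ, |q * z| < 1 →
      Summable (fun i : ℕ =>
        q ^ ((i + 1) * (i + 2) / 2) / (∏ j ∈ Finset.range (i + 1), (1 - q ^ (j + 1)))
          * z ^ (i + 1)) ∧
      ∏' i : ℕ, (1 + q ^ (i + 1) * z)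
        = 1 + ∑' i : ℕ,
            q ^ ((i + 1) * (i + 2) / 2) / (∏ j ∈ Finset.range (i + 1), (1 - q ^ (j + 1)))
              * z ^ (i + 1) :=
  ⟨fun z => EulerQB.multipliable_all hq hq1 z, fun z hz => EulerQB.main hq hq1 z hz⟩
end

section
/- For fixed real z ≥ 0, lim_{ε→0⁺} ∏_{i=1}^∞ (1 + e^{−iε} ε z) = e^z. -/
open Filter


lemma geo_summable {ε : ℝ} (hε : 0 < ε) : Summable (fun i : ℕ => (Real.exp (-ε))^(i+1)) := by
  have hr1 : Real.exp (-ε) < 1 := by rw [Real.exp_lt_one_iff]; linarith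
  exact ((summable_geometric_of_lt_one (Real.exp_pos _).le hr1).mul_left _).congr
    (fun i => (pow_succ' _ _).symm)

lemma geo_tsum {ε : ℝ} (hε : 0 < ε) :
    ∑' i : ℕ, (Real.exp (-ε))^(i+1) = 1 / (Real.exp ε - 1) := by
  set r := Real.exp (-ε) with hr
  have hr1 : r < 1 := by rw [hr, Real.exp_lt_one_iff]; linarith
  have h1 : ∑' i : ℕ, r^(i+1) = r * (1 - r)⁻¹ := by
    rw [show (fun i : ℕ => r^(i+1)) = (fun i : ℕ => r * r^i) from funext fun i => pow_succ' _ _,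
      tsum_mul_left, tsum_geometric_of_lt_one (Real.exp_pos _).le hr1]
  rw [h1]
  have hexp : Real.exp ε * r = 1 := by rw [hr, ← Real.exp_add]; simp
  have he1 : (1:ℝ) < Real.exp ε := by rw [Real.one_lt_exp_iff]; exact hε
  have h1r : 1 - r ≠ 0 := by nlinarith
  have he : Real.exp ε - 1 ≠ 0 := by nlinarith
  field_simp
  nlinarith

lemma slope_lim : Tendsto (fun t : ℝ => t / (Real.exp t - 1)) (nhdsWithin 0 (Set.Ioi 0)) (nhds 1) := by
  have h := Real.hasDerivAt_exp 0
  rw [hasDerivAt_iff_tendsto_slope] at h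
  have h1 : Tendsto (fun t : ℝ => (Real.exp t - 1) / t) (nhdsWithin 0 (Set.Ioi 0)) (nhds 1) := by
    have := h.mono_left (nhdsWithin_mono 0 (fun x hx => Set.mem_compl_singleton_iff.2 (ne_of_gt hx)))
    rw [Real.exp_zero] at this
    refine this.congr fun t => ?_
    simp [slope_def_field, div_eq_mul_inv]
  have := h1.inv₀ one_ne_zero
  simpa [inv_div] using this

lemma log_lb {x : ℝ} (hx : 0 ≤ x) : x - x^2 ≤ Real.log (1 + x) := by
  have h1 : (0:ℝ) < 1 + x := by linarith
  have h2 := Real.log_le_sub_one_of_pos (inv_pos.2 h1)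
  rw [Real.log_inv] at h2
  have h3 : 1 - (1+x)⁻¹ ≤ Real.log (1+x) := by linarith
  have h4 : (1+x) * (1+x)⁻¹ = 1 := mul_inv_cancel₀ (ne_of_gt h1)
  nlinarith [sq_nonneg x, inv_nonneg.2 h1.le]

/-- Classical limit: `lim_{ε→0⁺} ∏_{i=1}^∞ (1 + e^{−iε} ε z) = e^z` for `z ≥ 0`. -/
theorem classical_limit_Eprime (z : ℝ) (hz : 0 ≤ z) :
    Tendsto (fun ε : ℝ => ∏' i : ℕ, (1 + Real.exp (-((i : ℝ) + 1) * ε) * ε * z))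
      (nhdsWithin 0 (Set.Ioi 0)) (nhds (Real.exp z)) := by

  set S : ℝ → ℝ := fun ε => ∑' i : ℕ, Real.log (1 + Real.exp (-((i : ℝ) + 1) * ε) * ε * z)
    with hS_def
  -- pointwise facts for ε > 0
  have hx_eq : ∀ (ε : ℝ) (i : ℕ), Real.exp (-((i : ℝ) + 1) * ε) = (Real.exp (-ε))^(i+1) := by
    intro ε i
    rw [show (-((i:ℝ)+1) * ε) = ((i+1 : ℕ) : ℝ) * (-ε) by push_cast; ring, Real.exp_nat_mul]
  have hx_nonneg : ∀ (ε : ℝ), 0 < ε → ∀ i : ℕ, 0 ≤ Real.exp (-((i : ℝ) + 1) * ε) * ε * z := by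
    intro ε hε i
    positivity
  have hxsum : ∀ (ε : ℝ), 0 < ε →
      Summable (fun i : ℕ => Real.exp (-((i : ℝ) + 1) * ε) * ε * z) := by
    intro ε hε
    refine ((geo_summable hε).mul_right (ε * z)).congr fun i => ?_
    rw [hx_eq]; ring
  have hxtsum : ∀ (ε : ℝ), 0 < ε →
      ∑' i : ℕ, Real.exp (-((i : ℝ) + 1) * ε) * ε * z = ε * z / (Real.exp ε - 1) := by
    intro ε hε
    have : ∑' i : ℕ, Real.exp (-((i : ℝ) + 1) * ε) * ε * z
        = ∑' i : ℕ, (Real.exp (-ε))^(i+1) * (ε * z) := by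
      refine tsum_congr fun i => ?_; rw [hx_eq]; ring
    rw [this, tsum_mul_right, geo_tsum hε]; ring
  have hx2sum : ∀ (ε : ℝ), 0 < ε →
      Summable (fun i : ℕ => (Real.exp (-((i : ℝ) + 1) * ε) * ε * z)^2) := by
    intro ε hε
    refine ((geo_summable (by linarith : (0:ℝ) < 2*ε)).mul_right ((ε * z)^2)).congr fun i => ?_
    rw [hx_eq, show Real.exp (-(2*ε)) = (Real.exp (-ε))^2 by
      rw [show -(2*ε) = -ε + -ε by ring, Real.exp_add, ← pow_two], ← pow_mul,
      mul_comm 2 (i+1), pow_mul]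
    ring
  have hx2tsum : ∀ (ε : ℝ), 0 < ε →
      ∑' i : ℕ, (Real.exp (-((i : ℝ) + 1) * ε) * ε * z)^2
        = ε^2 * z^2 / (Real.exp (2*ε) - 1) := by
    intro ε hε
    have : ∑' i : ℕ, (Real.exp (-((i : ℝ) + 1) * ε) * ε * z)^2
        = ∑' i : ℕ, (Real.exp (-(2*ε)))^(i+1) * ((ε * z)^2) := by
      refine tsum_congr fun i => ?_
      rw [hx_eq, show Real.exp (-(2*ε)) = (Real.exp (-ε))^2 by
        rw [show -(2*ε) = -ε + -ε by ring, Real.exp_add, ← pow_two], ← pow_mul,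
        mul_comm 2 (i+1), pow_mul]
      ring
    rw [this, tsum_mul_right, geo_tsum (by linarith : (0:ℝ) < 2*ε)]; ring
  have hlog_le : ∀ (ε : ℝ), 0 < ε → ∀ i : ℕ,
      Real.log (1 + Real.exp (-((i : ℝ) + 1) * ε) * ε * z)
        ≤ Real.exp (-((i : ℝ) + 1) * ε) * ε * z := by
    intro ε hε i
    have := Real.log_le_sub_one_of_pos
      (by have := hx_nonneg ε hε i; linarith : (0:ℝ) < 1 + Real.exp (-((i : ℝ) + 1) * ε) * ε * z)
    linarith
  have hlog_nonneg : ∀ (ε : ℝ), 0 < ε → ∀ i : ℕ,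
      0 ≤ Real.log (1 + Real.exp (-((i : ℝ) + 1) * ε) * ε * z) := by
    intro ε hε i
    exact Real.log_nonneg (by have := hx_nonneg ε hε i; linarith)
  have hlogsum : ∀ (ε : ℝ), 0 < ε →
      Summable (fun i : ℕ => Real.log (1 + Real.exp (-((i : ℝ) + 1) * ε) * ε * z)) := by
    intro ε hε
    exact Summable.of_nonneg_of_le (hlog_nonneg ε hε) (hlog_le ε hε) (hxsum ε hε)
  -- squeeze for S
  have hupper : ∀ ε ∈ Set.Ioi (0:ℝ), S ε ≤ ε * z / (Real.exp ε - 1) := by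
    intro ε hε
    rw [hS_def, ← hxtsum ε hε]
    exact Summable.tsum_le_tsum (hlog_le ε hε) (hlogsum ε hε) (hxsum ε hε)
  have hlower : ∀ ε ∈ Set.Ioi (0:ℝ),
      ε * z / (Real.exp ε - 1) - ε^2 * z^2 / (Real.exp (2*ε) - 1) ≤ S ε := by
    intro ε hε
    rw [hS_def, ← hxtsum ε hε, ← hx2tsum ε hε, ← Summable.tsum_sub (hxsum ε hε) (hx2sum ε hε)]
    refine Summable.tsum_le_tsum (fun i => ?_) ((hxsum ε hε).sub (hx2sum ε hε)) (hlogsum ε hε)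
    have := log_lb (hx_nonneg ε hε i)
    linarith
  -- limits of bounds
  have hA : Tendsto (fun ε : ℝ => ε * z / (Real.exp ε - 1)) (nhdsWithin 0 (Set.Ioi 0)) (nhds z) := by
    have := slope_lim.const_mul z
    rw [mul_one] at this
    exact this.congr fun ε => by ring
  have h2e : Tendsto (fun ε : ℝ => (2*ε) / (Real.exp (2*ε) - 1)) (nhdsWithin 0 (Set.Ioi 0))
      (nhds 1) := by
    refine slope_lim.comp ?_
    refine tendsto_nhdsWithin_of_tendsto_nhds_of_eventually_within _ ?_ ?_
    · have : Tendsto (fun ε : ℝ => 2*ε) (nhds 0) (nhds (2*0)) := (continuous_const.mul continuous_id).tendsto 0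
      simpa using this.mono_left nhdsWithin_le_nhds
    · filter_upwards [self_mem_nhdsWithin] with ε hε
      exact Set.mem_Ioi.2 (by linarith [Set.mem_Ioi.1 hε])
  have hC : Tendsto (fun ε : ℝ => ε^2 * z^2 / (Real.exp (2*ε) - 1)) (nhdsWithin 0 (Set.Ioi 0))
      (nhds 0) := by
    have hc : Tendsto (fun ε : ℝ => ε * z^2 / 2) (nhdsWithin 0 (Set.Ioi 0)) (nhds 0) := by
      have : Tendsto (fun ε : ℝ => ε * z^2 / 2) (nhds 0) (nhds (0 * z^2 / 2)) :=
        ((continuous_id.mul continuous_const).div_const 2).tendsto 0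
      simpa using this.mono_left nhdsWithin_le_nhds
    have := hc.mul h2e
    rw [mul_one] at this
    exact this.congr fun ε => by ring
  have hB : Tendsto (fun ε : ℝ => ε * z / (Real.exp ε - 1) - ε^2 * z^2 / (Real.exp (2*ε) - 1))
      (nhdsWithin 0 (Set.Ioi 0)) (nhds z) := by
    have := hA.sub hC
    rwa [sub_zero] at this
  have hStend : Tendsto S (nhdsWithin 0 (Set.Ioi 0)) (nhds z) := by
    refine tendsto_of_tendsto_of_tendsto_of_le_of_le' hB hA ?_ ?_
    · filter_upwards [self_mem_nhdsWithin] with ε hε using hlower ε hε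
    · filter_upwards [self_mem_nhdsWithin] with ε hε using hupper ε hε
  -- convert to product
  have hfinal := (Real.continuous_exp.tendsto z).comp hStend
  refine hfinal.congr' ?_
  filter_upwards [self_mem_nhdsWithin] with ε hε
  have hε : (0:ℝ) < ε := hε
  have hpos : ∀ i : ℕ, 0 < 1 + Real.exp (-((i : ℝ) + 1) * ε) * ε * z := by
    intro i; have := hx_nonneg ε hε i; linarith
  have hprod : HasProd (fun i : ℕ => 1 + Real.exp (-((i : ℝ) + 1) * ε) * ε * z)
      (Real.exp (S ε)) := by
    have h2 := (hlogsum ε hε).hasSum.rexp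
    have h3 : (fun i : ℕ => Real.exp (Real.log (1 + Real.exp (-((i : ℝ) + 1) * ε) * ε * z)))
        = fun i : ℕ => 1 + Real.exp (-((i : ℝ) + 1) * ε) * ε * z :=
      funext fun i => Real.exp_log (hpos i)
    rw [Function.comp_def] at h2
    rwa [h3] at h2
  simp only [Function.comp]
  exact hprod.tprod_eq.symm
end

section
/- For fixed real z with 0 ≤ z < 1, lim_{ε→0⁺} ∏_{k=0}^∞ (1 − e^{−kε} ε z)^{-1} = e^z. -/
open Filter

private lemma cl_log_lb {x : ℝ} (h1 : x < 1) : x ≤ -Real.log (1 - x) := by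
  have := Real.log_le_sub_one_of_pos (x := 1 - x) (by linarith)
  linarith

private lemma cl_log_ub {x : ℝ} (h0 : 0 ≤ x) (h1 : x < 1) :
    -Real.log (1 - x) ≤ x / (1 - x) := by
  have hpos : 0 < 1 - x := by linarith
  have h := Real.log_le_sub_one_of_pos (x := (1 - x)⁻¹) (by positivity)
  rw [Real.log_inv] at h
  have h2 : -Real.log (1 - x) ≤ (1 - x)⁻¹ - 1 := by linarith
  calc -Real.log (1 - x) ≤ (1 - x)⁻¹ - 1 := h2
    _ = x / (1 - x) := by field_simp; ring

private lemma cl_exp_slope :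
    Tendsto (fun ε : ℝ => (1 - Real.exp (-ε)) / ε) (nhdsWithin 0 (Set.Ioi 0)) (nhds 1) := by
  have hd : HasDerivAt (fun x : ℝ => 1 - Real.exp (-x)) 1 0 := by
    have h1 : HasDerivAt (fun x : ℝ => Real.exp (-x)) (-1) 0 := by
      simpa [Function.comp_def] using (Real.hasDerivAt_exp (-0)).comp 0 (hasDerivAt_neg 0)
    simpa [Pi.sub_def] using (hasDerivAt_const 0 (1:ℝ)).sub h1
  have h := hasDerivAt_iff_tendsto_slope.mp hd
  have h2 := h.mono_left
    (nhdsWithin_mono 0 (fun x hx => ne_of_gt hx : Set.Ioi (0:ℝ) ⊆ {0}ᶜ))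
  refine h2.congr (fun ε => ?_)
  simp [slope, Real.exp_zero]
  ring

/-- Classical limit of `H(q,z)`: `lim_{ε→0⁺} ∏_{k=0}^∞ (1 − e^{−kε} ε z)⁻¹ = e^z`
for `0 ≤ z < 1`. -/
theorem classical_limit_H (z : ℝ) (hz0 : 0 ≤ z) (hz1 : z < 1) :
    Tendsto (fun ε : ℝ => ∏' k : ℕ, (1 - Real.exp (-(k : ℝ) * ε) * ε * z)⁻¹)
      (nhdsWithin 0 (Set.Ioi 0)) (nhds (Real.exp z)) := by
  set x : ℝ → ℕ → ℝ := fun ε k => Real.exp (-(k : ℝ) * ε) * ε * z with hxdef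
  set S : ℝ → ℝ := fun ε => ∑' k : ℕ, -Real.log (1 - x ε k) with hSdef
  set L : ℝ → ℝ := fun ε => (1 - Real.exp (-ε))⁻¹ * (ε * z) with hLdef
  have hIoo : Set.Ioo (0:ℝ) 1 ∈ nhdsWithin (0:ℝ) (Set.Ioi 0) :=
    Ioo_mem_nhdsGT_of_mem ⟨le_refl 0, one_pos⟩
  -- basic facts for ε ∈ Ioo 0 1
  have facts : ∀ ε ∈ Set.Ioo (0:ℝ) 1,
      (∀ k, 0 ≤ x ε k) ∧ (∀ k, x ε k ≤ ε * z) ∧ ε * z < 1 ∧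
      Summable (x ε) ∧ ∑' k, x ε k = L ε := by
    intro ε hε
    obtain ⟨hε0, hε1⟩ := hε
    have hez : ε * z < 1 := lt_of_le_of_lt (by nlinarith) hz1
    have hx0 : ∀ k, 0 ≤ x ε k := fun k => by
      have := Real.exp_nonneg (-(k:ℝ) * ε); positivity
    have hxle : ∀ k, x ε k ≤ ε * z := fun k => by
      have h1 : Real.exp (-(k:ℝ) * ε) ≤ 1 := by
        apply Real.exp_le_one_iff.mpr
        have : (0:ℝ) ≤ (k:ℝ) := Nat.cast_nonneg k
        nlinarith
      have := mul_nonneg hε0.le hz0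
      calc x ε k = Real.exp (-(k:ℝ) * ε) * (ε * z) := by rw [hxdef]; ring
        _ ≤ 1 * (ε * z) := by apply mul_le_mul_of_nonneg_right h1 this
        _ = ε * z := one_mul _
    have hxeq : ∀ k, x ε k = (Real.exp (-ε))^k * (ε * z) := fun k => by
      rw [hxdef]
      simp only []
      rw [show -(k:ℝ) * ε = (k:ℝ) * (-ε) by ring, Real.exp_nat_mul]
      ring
    have hrlt : Real.exp (-ε) < 1 := Real.exp_lt_one_iff.mpr (by linarith)
    have hsum : Summable (x ε) := by
      rw [funext hxeq]
      exact (summable_geometric_of_lt_one (Real.exp_nonneg _) hrlt).mul_right _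
    have htsum : ∑' k, x ε k = L ε := by
      rw [funext hxeq, tsum_mul_right,
        tsum_geometric_of_lt_one (Real.exp_nonneg _) hrlt]
    exact ⟨hx0, hxle, hez, hsum, htsum⟩
  -- summability of the log terms and bounds
  have logfacts : ∀ ε ∈ Set.Ioo (0:ℝ) 1,
      Summable (fun k => -Real.log (1 - x ε k)) ∧
      L ε ≤ S ε ∧ S ε ≤ L ε * (1 - ε * z)⁻¹ := by
    intro ε hε
    obtain ⟨hx0, hxle, hez, hsum, htsum⟩ := facts ε hε
    have hx1 : ∀ k, x ε k < 1 := fun k => lt_of_le_of_lt (hxle k) hez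
    have hub : ∀ k, -Real.log (1 - x ε k) ≤ x ε k * (1 - ε * z)⁻¹ := fun k => by
      have h1 : -Real.log (1 - x ε k) ≤ x ε k / (1 - x ε k) :=
        cl_log_ub (hx0 k) (hx1 k)
      have h2 : x ε k / (1 - x ε k) ≤ x ε k / (1 - ε * z) := by
        gcongr <;> first
          | exact hx0 k
          | linarith [hxle k, hx0 k, hez]
      calc -Real.log (1 - x ε k) ≤ x ε k / (1 - ε * z) := le_trans h1 h2
        _ = x ε k * (1 - ε * z)⁻¹ := div_eq_mul_inv _ _
    have hnn : ∀ k, 0 ≤ -Real.log (1 - x ε k) := fun k => by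
      have h := Real.log_nonpos (x := 1 - x ε k) (by linarith [hx1 k]) (by linarith [hx0 k])
      linarith
    have hsumlog : Summable (fun k => -Real.log (1 - x ε k)) :=
      Summable.of_nonneg_of_le hnn hub (hsum.mul_right _)
    have hlow : L ε ≤ S ε := by
      rw [← htsum, hSdef]
      exact Summable.tsum_le_tsum (fun k => cl_log_lb (hx1 k)) hsum hsumlog
    have hhigh : S ε ≤ L ε * (1 - ε * z)⁻¹ := by
      rw [← htsum, ← tsum_mul_right]
      exact Summable.tsum_le_tsum hub hsumlog (hsum.mul_right _)
    exact ⟨hsumlog, hlow, hhigh⟩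
  -- limits of the bounding functions
  have hL : Tendsto L (nhdsWithin 0 (Set.Ioi 0)) (nhds z) := by
    have h1 : Tendsto (fun ε : ℝ => ((1 - Real.exp (-ε)) / ε)⁻¹ * z)
        (nhdsWithin 0 (Set.Ioi 0)) (nhds z) := by
      have := (cl_exp_slope.inv₀ one_ne_zero).mul_const z
      simpa using this
    refine h1.congr' ?_
    filter_upwards [self_mem_nhdsWithin] with ε (hε : 0 < ε)
    have hne : (1 : ℝ) - Real.exp (-ε) ≠ 0 := by
      have : Real.exp (-ε) < 1 := Real.exp_lt_one_iff.mpr (by linarith)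
      linarith
    rw [hLdef]
    field_simp
  have hU : Tendsto (fun ε => L ε * (1 - ε * z)⁻¹)
      (nhdsWithin 0 (Set.Ioi 0)) (nhds z) := by
    have h2 : Tendsto (fun ε : ℝ => (1 - ε * z)⁻¹) (nhdsWithin 0 (Set.Ioi 0)) (nhds 1) := by
      have hc : Tendsto (fun ε : ℝ => (1 - ε * z)⁻¹) (nhds 0) (nhds ((1 - 0 * z)⁻¹)) := by
        apply Tendsto.inv₀
        · exact (continuous_const.sub (continuous_id.mul continuous_const)).tendsto 0
        · norm_num
      simpa using hc.mono_left nhdsWithin_le_nhds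
    simpa using hL.mul h2
  -- squeeze
  have hS : Tendsto S (nhdsWithin 0 (Set.Ioi 0)) (nhds z) := by
    refine tendsto_of_tendsto_of_tendsto_of_le_of_le' hL hU ?_ ?_
    · filter_upwards [hIoo] with ε hε
      exact (logfacts ε hε).2.1
    · filter_upwards [hIoo] with ε hε
      exact (logfacts ε hε).2.2
  -- conclude
  have hexp : Tendsto (fun ε => Real.exp (S ε)) (nhdsWithin 0 (Set.Ioi 0))
      (nhds (Real.exp z)) := (Real.continuous_exp.tendsto z).comp hS
  refine hexp.congr' ?_
  filter_upwards [hIoo] with ε hε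
  obtain ⟨hx0, hxle, hez, hsum, htsum⟩ := facts ε hε
  obtain ⟨hsumlog, -, -⟩ := logfacts ε hε
  have hx1 : ∀ k, x ε k < 1 := fun k => lt_of_le_of_lt (hxle k) hez
  have hprod : HasProd (fun k => (1 - x ε k)⁻¹) (Real.exp (S ε)) := by
    have := hsumlog.hasSum.rexp
    refine this.congr_fun (fun k => ?_)
    simp only [Function.comp_apply]
    rw [Real.exp_neg, Real.exp_log (by linarith [hx1 k])]
  exact hprod.tprod_eq.symm
end
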